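/- Let G = (V,E) be a graph on n vertices with edge-expansion at least 1, i.e., every S ⊆ V with |S| ≤ n/2 satisfies |δ_G(S)| ≥ |S|. Let b ≤ n, let G' be obtained from G by adding a new root vertex r adjacent to every vertex of V, and let W ⊆ V with |W| = b. Consider the capacity installation on G' assigning capacity 1 to every edge of G and to each edge {r, w} with w ∈ W, and capacity 0 to all other root edges. Then for every C ⊆ V with |C| = b and every S ⊆ V, the total capacity on edges of G' with exactly one endpoint in S is at least |S ∩ C|; hence this installation is a feasible solution to the f-SAND instance on G' with root r whose colors are all b-element subsets of V, and when each root edge costs n/b and each edge of G costs 1, its cost is n + |E|. -/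

import Mathlib

open scoped Classical
open Finset

namespace FSand

variable {V : Type} [Fintype V] [DecidableEq V]

/-- An edge crosses the cut `(S, Sᶜ)`. -/
def Crossing (S : Finset V) (e : Sym2 V) : Prop :=
  ∃ u v, e = s(u, v) ∧ u ∈ S ∧ v ∉ S

/-- Total capacity installed on edges crossing the cut `(S, Sᶜ)`. -/
noncomputable def cutCap (x : Sym2 V → ℕ) (S : Finset V) : ℕ :=
  ∑ e ∈ Finset.univ.filter (Crossing S), x e

/-- Feasibility of a capacity installation for the f-SAND instance `(G, r, C)`. -/
def Feasible {ι : Type} (G : SimpleGraph V) (r : V) (C : ι → Finset V)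
    (x : Sym2 V → ℕ) : Prop :=
  (∀ e, e ∉ G.edgeSet → x e = 0) ∧
  ∀ S : Finset V, r ∉ S → ∀ i : ι, (C i ∩ S).card ≤ cutCap x S

/-- Cost of a capacity installation. -/
noncomputable def instCost (w : Sym2 V → ℝ) (x : Sym2 V → ℕ) : ℝ :=
  ∑ e : Sym2 V, w e * (x e : ℝ)

/-- Total weight of the edges of a subgraph. -/
noncomputable def subgraphCost (G : SimpleGraph V) (w : Sym2 V → ℝ) (H : G.Subgraph) : ℝ :=
  ∑ e ∈ Finset.univ.filter (· ∈ H.edgeSet), w e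

/-- Minimum weight of a connected subgraph of `G` containing all vertices of `T`. -/
noncomputable def steinerCost (G : SimpleGraph V) (w : Sym2 V → ℝ) (T : Set V) : ℝ :=
  sInf {c | ∃ H : G.Subgraph, H.Connected ∧ T ⊆ H.verts ∧ c = subgraphCost G w H}

/-- Optimal value of the f-SAND instance. -/
noncomputable def OPT {ι : Type} (G : SimpleGraph V) (r : V) (C : ι → Finset V)
    (w : Sym2 V → ℝ) : ℝ :=
  sInf {c | ∃ x : Sym2 V → ℕ, Feasible G r C x ∧ instCost w x = c}

end FSand

namespace FSand

/-- The graph `G'` obtained from `G` by adding a new root vertex (`none`) adjacent to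
every vertex of `G`. -/
def rootJoin {V : Type} (G : SimpleGraph V) : SimpleGraph (Option V) where
  Adj a b :=
    (a = none ∧ ∃ v, b = some v) ∨ (b = none ∧ ∃ u, a = some u) ∨
      (∃ u v, a = some u ∧ b = some v ∧ G.Adj u v)
  symm := by
    constructor
    rintro a b (⟨ha, v, hb⟩ | ⟨hb, u, ha⟩ | ⟨u, v, ha, hb, h⟩)
    · exact Or.inr (Or.inl ⟨ha, v, hb⟩)
    · exact Or.inl ⟨hb, u, ha⟩
    · exact Or.inr (Or.inr ⟨v, u, hb, ha, h.symm⟩)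
  loopless := by
    constructor
    rintro a (⟨ha, v, hb⟩ | ⟨hb, u, ha⟩ | ⟨u, v, ha, hb, h⟩)
    · rw [ha] at hb; exact absurd hb (by simp)
    · rw [hb] at ha; exact absurd ha (by simp)
    · rw [ha] at hb; exact G.loopless.irrefl u (by cases hb; exact h)

end FSand


namespace FSand

variable {V : Type} [Fintype V] [DecidableEq V]

lemma crossing_compl_iff (S : Finset V) (e : Sym2 V) :
    Crossing Sᶜ e ↔ Crossing S e := by
  constructor
  · rintro ⟨u, v, rfl, hu, hv⟩
    refine ⟨v, u, Sym2.eq_swap.symm, ?_, ?_⟩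
    · simpa using hv
    · simpa using hu
  · rintro ⟨u, v, rfl, hu, hv⟩
    refine ⟨v, u, Sym2.eq_swap.symm, ?_, ?_⟩
    · simpa using hv
    · simpa using hu

lemma disj_aux (E' : Finset (Sym2 V)) (W' : Finset V) :
    Disjoint (E'.image (Sym2.map some))
      (W'.image fun w => s((none : Option V), some w)) := by
  rw [Finset.disjoint_left]
  intro e hA hB
  obtain ⟨e', -, rfl⟩ := Finset.mem_image.mp hA
  obtain ⟨w, -, hw⟩ := Finset.mem_image.mp hB
  have hmem : (none : Option V) ∈ Sym2.map some e' := by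
    rw [← hw]; exact Sym2.mem_mk_left _ _
  obtain ⟨a, -, ha⟩ := Sym2.mem_map.mp hmem
  exact Option.some_ne_none _ ha

lemma cutCap_image_eq (G : SimpleGraph V) (W S : Finset V) :
    cutCap (fun e =>
        if (∃ u v, e = s(some u, some v) ∧ G.Adj u v) ∨
            (∃ w ∈ W, e = s((none : Option V), some w)) then 1 else 0)
      (S.image some)
      = (G.edgeFinset.filter (Crossing S)).card + (S ∩ W).card := by
  classical
  unfold cutCap
  rw [Finset.sum_boole, Nat.cast_id, Finset.filter_filter]
  have hset : (Finset.univ.filter fun e => Crossing (S.image some) e ∧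
        ((∃ u v, e = s(some u, some v) ∧ G.Adj u v) ∨
          (∃ w ∈ W, e = s((none : Option V), some w))))
      = (G.edgeFinset.filter (Crossing S)).image (Sym2.map some)
        ∪ (S ∩ W).image (fun w => s((none : Option V), some w)) := by
    ext e
    simp only [Finset.mem_filter, Finset.mem_univ, true_and, Finset.mem_union,
      Finset.mem_image]
    constructor
    · rintro ⟨⟨a, c, heq, ha, hc⟩, hP⟩
      rcases hP with ⟨u, v, rfl, hadj⟩ | ⟨w, hw, rfl⟩
      · left
        rcases Sym2.eq_iff.mp heq with ⟨h1, h2⟩ | ⟨h1, h2⟩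
        · subst h1; subst h2
          obtain ⟨u', hu', hu''⟩ := Finset.mem_image.mp ha
          have hu : u ∈ S := by cases hu''; exact hu'
          have hv : v ∉ S := fun h => hc (Finset.mem_image_of_mem _ h)
          refine ⟨s(u, v), ?_, Sym2.map_pair_eq _ _ _⟩
          exact ⟨SimpleGraph.mem_edgeFinset.mpr hadj, u, v, rfl, hu, hv⟩
        · subst h1; subst h2
          obtain ⟨v', hv', hv''⟩ := Finset.mem_image.mp ha
          have hv : v ∈ S := by cases hv''; exact hv'
          have hu : u ∉ S := fun h => hc (Finset.mem_image_of_mem _ h)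
          refine ⟨s(u, v), ?_, Sym2.map_pair_eq _ _ _⟩
          exact ⟨SimpleGraph.mem_edgeFinset.mpr hadj, v, u, Sym2.eq_swap, hv, hu⟩
      · right
        rcases Sym2.eq_iff.mp heq with ⟨h1, h2⟩ | ⟨h1, h2⟩
        · exfalso
          obtain ⟨a', -, ha'⟩ := Finset.mem_image.mp (h1 ▸ ha)
          exact Option.some_ne_none _ ha'
        · obtain ⟨w', hw', hw''⟩ := Finset.mem_image.mp (h2 ▸ ha)
          have : w ∈ S := by cases hw''; exact hw'
          exact ⟨w, Finset.mem_inter.mpr ⟨this, hw⟩, rfl⟩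
    · rintro (⟨e', he', rfl⟩ | ⟨w, hw, rfl⟩)
      · obtain ⟨hedge, hcr⟩ := he'
        obtain ⟨u, v, rfl, hu, hv⟩ : ∃ u v, e' = s(u, v) ∧ u ∈ S ∧ v ∉ S := hcr
        rw [Sym2.map_pair_eq]
        refine ⟨⟨some u, some v, rfl, Finset.mem_image_of_mem _ hu, ?_⟩,
          Or.inl ⟨u, v, rfl, SimpleGraph.mem_edgeFinset.mp hedge⟩⟩
        intro h
        obtain ⟨v', hv', hv''⟩ := Finset.mem_image.mp h
        cases hv''; exact hv hv'
      · obtain ⟨hwS, hwW⟩ := Finset.mem_inter.mp hw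
        refine ⟨⟨some w, none, Sym2.eq_swap, Finset.mem_image_of_mem _ hwS, ?_⟩,
          Or.inr ⟨w, hwW, rfl⟩⟩
        intro h
        obtain ⟨v', -, hv''⟩ := Finset.mem_image.mp h
        exact Option.some_ne_none _ hv''
  rw [hset, Finset.card_union_of_disjoint (disj_aux _ _),
    Finset.card_image_of_injective _ (Sym2.map.injective (Option.some_injective V)),
    Finset.card_image_of_injective _ (fun a b h => by
      simpa using (Sym2.eq_iff.mp h))]

end FSand

open FSand in
/-- if `G` has edge-expansion at least 1, then installing one unit of
capacity on every edge of `G` and on `b` root edges (to the set `W`) cuts every set `S`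
with capacity at least `|S ∩ C|` for every `b`-set `C`; hence it is feasible for the
f-SAND instance whose colors are all `b`-element subsets, and with root edges of cost
`n/b` and graph edges of cost `1` its cost is `n + |E|`. -/
theorem stmt_11 {V : Type} [Fintype V] [DecidableEq V]
    (G : SimpleGraph V) (n : ℕ) (hn : n = Fintype.card V)
    (hexp : ∀ S : Finset V, 2 * S.card ≤ n →
      S.card ≤ (G.edgeFinset.filter (Crossing S)).card)
    (b : ℕ) (hb : 0 < b) (hbn : b ≤ n)
    (W : Finset V) (hW : W.card = b) :
    (∀ C : Finset V, C.card = b → ∀ S : Finset V,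
      (S ∩ C).card ≤
        cutCap (fun e =>
          if (∃ u v, e = s(some u, some v) ∧ G.Adj u v) ∨
              (∃ w ∈ W, e = s((none : Option V), some w)) then 1 else 0)
          (S.image some)) ∧
    Feasible (rootJoin G) (none : Option V)
      (fun C : {C : Finset V // C.card = b} => C.1.image some)
      (fun e =>
        if (∃ u v, e = s(some u, some v) ∧ G.Adj u v) ∨
            (∃ w ∈ W, e = s((none : Option V), some w)) then 1 else 0) ∧
    instCost (fun e : Sym2 (Option V) =>
        if (none : Option V) ∈ e then (n : ℝ) / b else 1)
      (fun e =>
        if (∃ u v, e = s(some u, some v) ∧ G.Adj u v) ∨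
            (∃ w ∈ W, e = s((none : Option V), some w)) then 1 else 0) =
      (n : ℝ) + G.edgeFinset.card := by
  classical
  have key : ∀ C : Finset V, C.card = b → ∀ S : Finset V,
      (S ∩ C).card ≤
        cutCap (fun e =>
          if (∃ u v, e = s(some u, some v) ∧ G.Adj u v) ∨
              (∃ w ∈ W, e = s((none : Option V), some w)) then 1 else 0)
          (S.image some) := by
    intro C hC S
    rw [cutCap_image_eq]
    by_cases hS : 2 * S.card ≤ n
    · have h1 : (S ∩ C).card ≤ S.card := Finset.card_le_card Finset.inter_subset_left
      have h2 := hexp S hS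
      omega
    · have hSn : S.card ≤ n := hn ▸ Finset.card_le_univ S
      have hcompl : Sᶜ.card = n - S.card := by rw [Finset.card_compl, ← hn]
      have h2 := hexp Sᶜ (by omega)
      have hfe : G.edgeFinset.filter (Crossing Sᶜ) = G.edgeFinset.filter (Crossing S) := by
        apply Finset.filter_congr
        intro e _
        simp [crossing_compl_iff]
      rw [hfe, hcompl] at h2
      have h3 : (S ∩ W).card + (S ∪ W).card = S.card + W.card :=
        Finset.card_inter_add_card_union S W
      have h4 : (S ∪ W).card ≤ n := hn ▸ Finset.card_le_univ _
      have h5 : (S ∩ C).card ≤ b := hC ▸ Finset.card_le_card Finset.inter_subset_right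
      omega
  refine ⟨key, ⟨?_, ?_⟩, ?_⟩
  · intro e he
    simp only
    rw [if_neg]
    rintro (⟨u, v, rfl, hadj⟩ | ⟨w, hw, rfl⟩)
    · exact he ((rootJoin G).mem_edgeSet.mpr (Or.inr (Or.inr ⟨u, v, rfl, rfl, hadj⟩)))
    · exact he ((rootJoin G).mem_edgeSet.mpr (Or.inl ⟨rfl, w, rfl⟩))
  · intro S hS i
    have hSimg : S = (S.preimage some (Option.some_injective V).injOn).image some := by
      ext a
      cases a with
      | none => simp [hS]
      | some v => simp [Finset.mem_preimage]
    rw [hSimg]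
    have himg : (i.1.image some) ∩ ((S.preimage some (Option.some_injective V).injOn).image some)
        = (i.1 ∩ (S.preimage some (Option.some_injective V).injOn)).image some :=
      (Finset.image_inter _ _ (Option.some_injective V)).symm
    simp only
    rw [himg, Finset.card_image_of_injective _ (Option.some_injective V), Finset.inter_comm]
    exact key i.1 i.2 _
  · unfold instCost
    have hb0 : (b : ℝ) ≠ 0 := Nat.cast_ne_zero.mpr hb.ne'
    have step1 : ∑ e : Sym2 (Option V),
        (if (none : Option V) ∈ e then (n : ℝ) / b else 1) *
          ((if (∃ u v, e = s(some u, some v) ∧ G.Adj u v) ∨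
              (∃ w ∈ W, e = s((none : Option V), some w)) then 1 else 0 : ℕ) : ℝ)
        = ∑ e ∈ Finset.univ.filter (fun e => (∃ u v, e = s(some u, some v) ∧ G.Adj u v) ∨
              (∃ w ∈ W, e = s((none : Option V), some w))),
            (if (none : Option V) ∈ e then (n : ℝ) / b else 1) := by
      rw [Finset.sum_filter]
      apply Finset.sum_congr rfl
      intro e _
      by_cases hP : (∃ u v, e = s(some u, some v) ∧ G.Adj u v) ∨
          (∃ w ∈ W, e = s((none : Option V), some w))
      · rw [if_pos hP, if_pos hP]; simp
      · rw [if_neg hP, if_neg hP]; simp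
    have hsplit : Finset.univ.filter (fun e => (∃ u v, e = s(some u, some v) ∧ G.Adj u v) ∨
          (∃ w ∈ W, e = s((none : Option V), some w)))
        = (G.edgeFinset.image (Sym2.map some))
          ∪ (W.image fun w => s((none : Option V), some w)) := by
      ext e
      simp only [Finset.mem_filter, Finset.mem_univ, true_and, Finset.mem_union,
        Finset.mem_image]
      constructor
      · rintro (⟨u, v, rfl, hadj⟩ | ⟨w, hw, rfl⟩)
        · exact Or.inl ⟨s(u, v), SimpleGraph.mem_edgeFinset.mpr hadj, Sym2.map_pair_eq _ _ _⟩
        · exact Or.inr ⟨w, hw, rfl⟩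
      · rintro (⟨e', he', rfl⟩ | ⟨w, hw, rfl⟩)
        · induction e' using Sym2.ind with
          | _ u v =>
            rw [Sym2.map_pair_eq]
            exact Or.inl ⟨u, v, rfl, SimpleGraph.mem_edgeFinset.mp he'⟩
        · exact Or.inr ⟨w, hw, rfl⟩
    rw [step1, hsplit, Finset.sum_union (disj_aux _ _)]
    have hA : ∑ e ∈ G.edgeFinset.image (Sym2.map some),
        (if (none : Option V) ∈ e then (n : ℝ) / b else 1) = G.edgeFinset.card := by
      have hc : ∀ e ∈ G.edgeFinset.image (Sym2.map some),
          (if (none : Option V) ∈ e then (n : ℝ) / b else 1) = 1 := by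
        intro e he
        obtain ⟨e', -, rfl⟩ := Finset.mem_image.mp he
        rw [if_neg]
        intro hmem
        obtain ⟨a, -, ha⟩ := Sym2.mem_map.mp hmem
        exact Option.some_ne_none _ ha
      rw [Finset.sum_congr rfl hc, Finset.sum_const, nsmul_eq_mul, mul_one,
        Finset.card_image_of_injective _ (Sym2.map.injective (Option.some_injective V))]
    have hB : ∑ e ∈ W.image (fun w => s((none : Option V), some w)),
        (if (none : Option V) ∈ e then (n : ℝ) / b else 1) = (n : ℝ) := by
      have hc : ∀ e ∈ W.image (fun w => s((none : Option V), some w)),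
          (if (none : Option V) ∈ e then (n : ℝ) / b else 1) = (n : ℝ) / b := by
        intro e he
        obtain ⟨w, -, rfl⟩ := Finset.mem_image.mp he
        rw [if_pos (Sym2.mem_mk_left _ _)]
      rw [Finset.sum_congr rfl hc, Finset.sum_const, nsmul_eq_mul,
        Finset.card_image_of_injective _ (fun a b h => by simpa using (Sym2.eq_iff.mp h)),
        hW, mul_comm, div_mul_cancel₀ _ hb0]
    rw [hA, hB, add_comm]
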